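/- Let α be a composition and σ ∈ S_{ℓ(α)}. The set of SPCTs of shape α and type σ contains a unique source tableau if and only if α is σ-simple. -/

import Mathlib

/-- `α` is compatible with `σ`: `α_i ≥ α_j` whenever `i < j` and `σ(i) > σ(j)`. -/
def Compatible {ℓ : ℕ} (α : Fin ℓ → ℕ) (σ : Equiv.Perm (Fin ℓ)) : Prop :=
  ∀ i j : Fin ℓ, i < j → σ j < σ i → α j ≤ α i

/-- `τ` is a standard permuted composition tableau (SPCT) of shape `α` (a composition of `n`
with `ℓ` rows, row `i` having boxes in columns `0,…,α i − 1`) and type `σ`: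
the boxes are filled with the distinct entries `1,…,n`; the standardization of the first
column read top to bottom is `σ` (expressed by order-equivalence with `σ`); rows weakly
decrease left to right; and the triple condition holds. -/
def IsSPCT {ℓ : ℕ} (n : ℕ) (α : Fin ℓ → ℕ) (σ : Equiv.Perm (Fin ℓ))
    (τ : Fin ℓ → ℕ → ℕ) : Prop :=
  (∀ (i : Fin ℓ) (c : ℕ), c < α i → 1 ≤ τ i c ∧ τ i c ≤ n) ∧
  (∀ (i : Fin ℓ) (c : ℕ) (i' : Fin ℓ) (c' : ℕ),
      c < α i → c' < α i' → τ i c = τ i' c' → i = i' ∧ c = c') ∧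
  (∀ v : ℕ, 1 ≤ v → v ≤ n → ∃ (i : Fin ℓ) (c : ℕ), c < α i ∧ τ i c = v) ∧
  (∀ i i' : Fin ℓ, τ i 0 < τ i' 0 ↔ σ i < σ i') ∧
  (∀ (i : Fin ℓ) (c : ℕ), c + 1 < α i → τ i (c + 1) ≤ τ i c) ∧
  (∀ (i i' : Fin ℓ) (c : ℕ), i < i' → c < α i → c + 1 < α i' →
      τ i' (c + 1) < τ i c → c + 1 < α i ∧ τ i' (c + 1) < τ i (c + 1))

/-- `d` is a descent of `τ`: the entry `d+1` lies weakly to the right of `d`. -/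
def IsDescent {ℓ : ℕ} (α : Fin ℓ → ℕ) (τ : Fin ℓ → ℕ → ℕ) (d : ℕ) : Prop :=
  ∃ (i : Fin ℓ) (c : ℕ) (i' : Fin ℓ) (c' : ℕ),
    c < α i ∧ c' < α i' ∧ τ i c = d ∧ τ i' c' = d + 1 ∧ c ≤ c'

/-- `τ` is a source tableau: an SPCT such that for every non-descent `d ≠ n`, the entry
`d+1` lies in the box immediately to the left of the box containing `d`. -/
def IsSourceTableau {ℓ : ℕ} (n : ℕ) (α : Fin ℓ → ℕ) (σ : Equiv.Perm (Fin ℓ))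
    (τ : Fin ℓ → ℕ → ℕ) : Prop :=
  IsSPCT n α σ τ ∧
  ∀ d : ℕ, 1 ≤ d → d + 1 ≤ n → ¬ IsDescent α τ d →
    ∀ (i : Fin ℓ) (c : ℕ), c < α i → τ i c = d → ∃ c', c = c' + 1 ∧ τ i c' = d + 1

/-- `(i,j)` is a permutation-ascending composition-descending (PACD) pair for `(α; σ)`. -/
def PACD {ℓ : ℕ} (α : Fin ℓ → ℕ) (σ : Equiv.Perm (Fin ℓ)) (i j : Fin ℓ) : Prop :=
  i < j ∧ σ i < σ j ∧ 2 ≤ α j ∧ α j ≤ α i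

/-- `α` is `σ`-simple: it is compatible with `σ` and every PACD pair satisfies C1 or C2. -/
def SigmaSimple {ℓ : ℕ} (α : Fin ℓ → ℕ) (σ : Equiv.Perm (Fin ℓ)) : Prop :=
  Compatible α σ ∧
  ∀ i j : Fin ℓ, PACD α σ i j →
    (∃ k, i < k ∧ k < j ∧ σ i < σ k ∧ σ k < σ j ∧ α k = α j - 1) ∨
    (∃ k, j < k ∧ σ i < σ k ∧ σ k < σ j ∧ α k = α j)

/-- The part `α_j` has a removable node with respect to `σ`: either `σ(j) = 1`
(the smallest value, `0` in `Fin ℓ`), or `α_j ≥ 2`, no `k < j` has `σ(k) < σ(j)` and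
`α_k = α_j − 1`, and no `k > j` has `σ(k) < σ(j)` and `α_k = α_j`. -/
def Removable {ℓ : ℕ} (α : Fin ℓ → ℕ) (σ : Equiv.Perm (Fin ℓ)) (j : Fin ℓ) : Prop :=
  (σ j : ℕ) = 0 ∨
  (2 ≤ α j ∧ (∀ k, k < j → σ k < σ j → α k ≠ α j - 1) ∧
    (∀ k, j < k → σ k < σ j → α k ≠ α j))

/-- The canonical source tableau `τ^σ_{C,α}`: row `r` is filled, in decreasing order from
left to right, with the consecutive block of integers following all entries of rows `r'`
with `σ r' < σ r`. -/
def canonEntry {ℓ : ℕ} (α : Fin ℓ → ℕ) (σ : Equiv.Perm (Fin ℓ)) (r : Fin ℓ) (c : ℕ) : ℕ :=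
  (∑ j ∈ Finset.univ.filter (fun j => σ j < σ r), α j) + α r - c

open Finset in
/-- Sum of parts of rows strictly below `r` in σ-order. -/
def Ssum {ℓ : ℕ} (α : Fin ℓ → ℕ) (σ : Equiv.Perm (Fin ℓ)) (r : Fin ℓ) : ℕ :=
  ∑ j ∈ Finset.univ.filter (fun j => σ j < σ r), α j

lemma canonEntry_def {ℓ : ℕ} (α : Fin ℓ → ℕ) (σ : Equiv.Perm (Fin ℓ)) (r : Fin ℓ) (c : ℕ) :
    canonEntry α σ r c = Ssum α σ r + α r - c := rfl

section Sums
variable {ℓ : ℕ} (α : Fin ℓ → ℕ) (σ : Equiv.Perm (Fin ℓ))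

lemma Ssucc (r : Fin ℓ) :
    Ssum α σ r + α r = ∑ j ∈ Finset.univ.filter (fun j => σ j ≤ σ r), α j := by
  have h : Finset.univ.filter (fun j => σ j ≤ σ r)
      = insert r (Finset.univ.filter (fun j => σ j < σ r)) := by
    ext x
    simp only [Finset.mem_filter, Finset.mem_insert, Finset.mem_univ, true_and]
    constructor
    · intro hx
      rcases lt_or_eq_of_le hx with h1 | h1
      · exact Or.inr h1
      · exact Or.inl (σ.injective h1)
    · rintro (rfl | hx)
      · exact le_refl _
      · exact le_of_lt hx
  rw [h, Finset.sum_insert (by simp)]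
  unfold Ssum; omega

lemma Smono {a b : Fin ℓ} (h : σ a < σ b) : Ssum α σ a + α a ≤ Ssum α σ b := by
  rw [Ssucc]
  apply Finset.sum_le_sum_of_subset
  intro x hx
  simp only [Finset.mem_filter, Finset.mem_univ, true_and] at *
  exact lt_of_le_of_lt hx h

lemma Stot (r : Fin ℓ) (h : ∀ j, σ j ≤ σ r) : Ssum α σ r + α r = ∑ i, α i := by
  rw [Ssucc]
  congr 1
  ext x
  simp [h x]

lemma Sle (r : Fin ℓ) : Ssum α σ r + α r ≤ ∑ i, α i := by
  rw [Ssucc]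
  apply Finset.sum_le_sum_of_subset
  intro x _; simp

end Sums

section Canon
variable {ℓ : ℕ} {α : Fin ℓ → ℕ} {σ : Equiv.Perm (Fin ℓ)}

lemma canon_inj (hpos : ∀ i, 0 < α i) {r r' : Fin ℓ} {c c' : ℕ}
    (hc : c < α r) (hc' : c' < α r')
    (h : canonEntry α σ r c = canonEntry α σ r' c') : r = r' ∧ c = c' := by
  rw [canonEntry_def, canonEntry_def] at h
  rcases lt_trichotomy (σ r) (σ r') with ht | ht | ht
  · have := Smono α σ ht
    omega
  · have : r = r' := σ.injective ht
    subst this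
    exact ⟨rfl, by omega⟩
  · have := Smono α σ ht
    omega

lemma canon_surj (hpos : ∀ i, 0 < α i) {v : ℕ} (h1 : 1 ≤ v) (h2 : v ≤ ∑ i, α i) :
    ∃ r c, c < α r ∧ canonEntry α σ r c = v := by
  have hl : 0 < ℓ := by
    by_contra h
    have : ℓ = 0 := by omega
    subst this
    simp at h2
    omega
  have hne : (Finset.univ.filter (fun r : Fin ℓ => Ssum α σ r < v)).Nonempty := by
    refine ⟨σ.symm ⟨0, hl⟩, ?_⟩
    simp only [Finset.mem_filter, Finset.mem_univ, true_and]
    have : Ssum α σ (σ.symm ⟨0, hl⟩) = 0 := by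
      apply Finset.sum_eq_zero
      intro x hx
      simp only [Finset.mem_filter, Finset.mem_univ, true_and, Equiv.apply_symm_apply] at hx
      exact absurd hx (by simp [Fin.lt_def])
    omega
  obtain ⟨r, hr, hrmax⟩ := Finset.exists_max_image _ (fun r => σ r) hne
  simp only [Finset.mem_filter, Finset.mem_univ, true_and] at hr
  by_cases hv : v ≤ Ssum α σ r + α r
  · exact ⟨r, Ssum α σ r + α r - v, by omega, by rw [canonEntry_def]; omega⟩
  · exfalso
    by_cases htop : ∀ j, σ j ≤ σ r
    · have := Stot α σ r htop
      omega
    · push_neg at htop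
      obtain ⟨j, hj⟩ := htop
      have hlt : (σ r : ℕ) + 1 < ℓ := by
        have h1 := (σ j).isLt
        have h2 : (σ r : ℕ) < (σ j : ℕ) := hj
        omega
      set r' := σ.symm ⟨(σ r : ℕ) + 1, hlt⟩ with hr'
      have hσr' : (σ r' : ℕ) = (σ r : ℕ) + 1 := by
        rw [hr']; simp
      have hS' : Ssum α σ r' = Ssum α σ r + α r := by
        rw [Ssucc]
        apply Finset.sum_congr _ (fun x _ => rfl)
        ext x
        simp only [Finset.mem_filter, Finset.mem_univ, true_and]
        rw [Fin.lt_def, Fin.le_def]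
        omega
      have hmem : r' ∈ Finset.univ.filter (fun r : Fin ℓ => Ssum α σ r < v) := by
        simp only [Finset.mem_filter, Finset.mem_univ, true_and]
        omega
      have := hrmax r' hmem
      rw [Fin.le_def] at this
      omega

lemma canon_col0 (r : Fin ℓ) : canonEntry α σ r 0 = Ssum α σ r + α r := by
  rw [canonEntry_def]; omega

lemma canon_std (hpos : ∀ i, 0 < α i) (r r' : Fin ℓ) :
    canonEntry α σ r 0 < canonEntry α σ r' 0 ↔ σ r < σ r' := by
  rw [canon_col0, canon_col0]
  constructor
  · intro h
    rcases lt_trichotomy (σ r) (σ r') with ht | ht | ht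
    · exact ht
    · exact absurd h (by rw [σ.injective ht]; omega)
    · have := Smono α σ ht
      have := hpos r
      omega
  · intro h
    have := Smono α σ h
    have := hpos r'
    omega

lemma canon_isSPCT (hpos : ∀ i, 0 < α i) (hcompat : Compatible α σ) :
    IsSPCT (∑ i, α i) α σ (canonEntry α σ) := by
  refine ⟨?_, ?_, ?_, ?_, ?_, ?_⟩
  · intro i c hc
    rw [canonEntry_def]
    have := Sle α σ i
    constructor <;> omega
  · intro i c i' c' hc hc' h
    exact canon_inj hpos hc hc' h
  · intro v h1 h2
    exact canon_surj hpos h1 h2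
  · intro i i'
    exact canon_std hpos i i'
  · intro i c hc
    rw [canonEntry_def, canonEntry_def]
    omega
  · intro a b c hab hca hcb h
    rw [canonEntry_def, canonEntry_def] at h
    rcases lt_trichotomy (σ a) (σ b) with ht | ht | ht
    · exfalso
      have := Smono α σ ht
      omega
    · exact absurd (σ.injective ht) (by intro h'; subst h'; exact absurd hab (lt_irrefl _))
    · have hba := hcompat a b hab ht
      refine ⟨by omega, ?_⟩
      rw [canonEntry_def, canonEntry_def]
      have := Smono α σ ht
      have := hpos a
      omega

lemma canon_isSource (hpos : ∀ i, 0 < α i) (hcompat : Compatible α σ) :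
    IsSourceTableau (∑ i, α i) α σ (canonEntry α σ) := by
  refine ⟨canon_isSPCT hpos hcompat, ?_⟩
  intro d hd1 hdn hnd i c hc hval
  rcases Nat.eq_zero_or_pos c with rfl | hc1
  · exfalso
    apply hnd
    obtain ⟨r, c', hc', hval'⟩ := canon_surj (σ := σ) hpos (by omega) hdn
    exact ⟨i, 0, r, c', hc, hc', hval, hval', Nat.zero_le _⟩
  · refine ⟨c - 1, by omega, ?_⟩
    rw [canonEntry_def] at *
    omega

section Alt
variable {ℓ : ℕ} {α : Fin ℓ → ℕ} {σ : Equiv.Perm (Fin ℓ)}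

/-- The cycle permutation used to build the second source tableau. -/
def phiFn (m M w : ℕ) : ℕ := if m ≤ w ∧ w ≤ M then w + 1 else if w = M + 1 then m else w

/-- The alternative source tableau for a PACD pair failing C1 and C2. -/
def altEntry (α : Fin ℓ → ℕ) (σ : Equiv.Perm (Fin ℓ)) (i₀ j₀ : Fin ℓ) (r : Fin ℓ) (c : ℕ) : ℕ :=
  phiFn (Ssum α σ i₀ + 1) (Ssum α σ j₀) (canonEntry α σ r c)

variable {i₀ j₀ : Fin ℓ}

lemma phi_mono {m M w w' : ℕ} (h : w ≠ M + 1) (h' : w' ≠ M + 1) :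
    phiFn m M w < phiFn m M w' ↔ w < w' := by
  unfold phiFn
  split_ifs <;> omega

lemma phi_inj {m M w w' : ℕ} (hm : m ≤ M + 1) (h : phiFn m M w = phiFn m M w') : w = w' := by
  unfold phiFn at h
  split_ifs at h <;> omega

lemma hmM (hpos : ∀ i, 0 < α i) (hσ : σ i₀ < σ j₀) : Ssum α σ i₀ + 1 ≤ Ssum α σ j₀ := by
  have := Smono α σ hσ
  have := hpos i₀
  omega

/-- box `s* = (j₀, α j₀ - 1)` is the unique box with canon value `M+1`. -/
lemma canon_special (hpos : ∀ i, 0 < α i) : canonEntry α σ j₀ (α j₀ - 1) = Ssum α σ j₀ + 1 := by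
  rw [canonEntry_def]
  have := hpos j₀
  omega

lemma canon_ne_special (hpos : ∀ i, 0 < α i) {r : Fin ℓ} {c : ℕ} (hc : c < α r)
    (hne : ¬(r = j₀ ∧ c = α j₀ - 1)) :
    canonEntry α σ r c ≠ Ssum α σ j₀ + 1 := by
  intro h
  rw [← canon_special (α := α) (σ := σ) hpos] at h
  have := hpos j₀
  obtain ⟨h1, h2⟩ := canon_inj hpos hc (by omega) h
  exact hne ⟨h1, h2⟩

lemma alt_special (hpos : ∀ i, 0 < α i) (hσ : σ i₀ < σ j₀) :
    altEntry α σ i₀ j₀ j₀ (α j₀ - 1) = Ssum α σ i₀ + 1 := by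
  unfold altEntry
  rw [canon_special hpos]
  have := hmM hpos hσ
  unfold phiFn
  split_ifs <;> omega

lemma alt_mono (hpos : ∀ i, 0 < α i) {r r' : Fin ℓ} {c c' : ℕ} (hc : c < α r) (hc' : c' < α r')
    (hne : ¬(r = j₀ ∧ c = α j₀ - 1)) (hne' : ¬(r' = j₀ ∧ c' = α j₀ - 1)) :
    altEntry α σ i₀ j₀ r c < altEntry α σ i₀ j₀ r' c' ↔
      canonEntry α σ r c < canonEntry α σ r' c' :=
  phi_mono (canon_ne_special hpos hc hne) (canon_ne_special hpos hc' hne')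

end Alt

section AltMain
variable {ℓ : ℕ} {α : Fin ℓ → ℕ} {σ : Equiv.Perm (Fin ℓ)} {i₀ j₀ : Fin ℓ}

lemma SmonoLe {a b : Fin ℓ} (h : σ a ≤ σ b) : Ssum α σ a ≤ Ssum α σ b := by
  apply Finset.sum_le_sum_of_subset
  intro x hx
  simp only [Finset.mem_filter, Finset.mem_univ, true_and] at *
  exact lt_of_lt_of_le hx h

lemma canon_triple (hpos : ∀ i, 0 < α i) (hcompat : Compatible α σ) :
    ∀ (a b : Fin ℓ) (c : ℕ), a < b → c < α a → c + 1 < α b →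
      canonEntry α σ b (c+1) < canonEntry α σ a c →
      c + 1 < α a ∧ canonEntry α σ b (c+1) < canonEntry α σ a (c+1) :=
  (canon_isSPCT hpos hcompat).2.2.2.2.2

theorem alt_isSPCT (hpos : ∀ i, 0 < α i) (hcompat : Compatible α σ)
    (hij : i₀ < j₀) (hσ : σ i₀ < σ j₀) (hα2 : 2 ≤ α j₀) (hαle : α j₀ ≤ α i₀)
    (hC1 : ¬ ∃ k, i₀ < k ∧ k < j₀ ∧ σ i₀ < σ k ∧ σ k < σ j₀ ∧ α k = α j₀ - 1)
    (hC2 : ¬ ∃ k, j₀ < k ∧ σ i₀ < σ k ∧ σ k < σ j₀ ∧ α k = α j₀) :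
    IsSPCT (∑ i, α i) α σ (altEntry α σ i₀ j₀) := by
  have hmm : Ssum α σ i₀ + 1 ≤ Ssum α σ j₀ := hmM hpos hσ
  have hMn : Ssum α σ j₀ + α j₀ ≤ ∑ i, α i := Sle α σ j₀
  have hcanon_lb : ∀ (r : Fin ℓ) (c : ℕ), c < α r →
      Ssum α σ r + 1 ≤ canonEntry α σ r c ∧ canonEntry α σ r c ≤ Ssum α σ r + α r := by
    intro r c hc
    rw [canonEntry_def]
    omega
  refine ⟨?_, ?_, ?_, ?_, ?_, ?_⟩
  · intro i c hc
    obtain ⟨h1, h2⟩ := hcanon_lb i c hc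
    have h3 := Sle α σ i
    unfold altEntry phiFn
    split_ifs <;> omega
  · intro i c i' c' hc hc' h
    exact canon_inj hpos hc hc' (phi_inj (by omega) h)
  · intro v h1 h2
    obtain ⟨r, c, hcr, hval⟩ := canon_surj (σ := σ) hpos
      (v := if v = Ssum α σ i₀ + 1 then Ssum α σ j₀ + 1
            else if Ssum α σ i₀ + 2 ≤ v ∧ v ≤ Ssum α σ j₀ + 1 then v - 1 else v)
      (by split_ifs <;> omega) (by split_ifs <;> omega)
    refine ⟨r, c, hcr, ?_⟩
    unfold altEntry
    rw [hval]
    unfold phiFn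
    split_ifs at * <;> omega
  · intro i i'
    have hne : ∀ r : Fin ℓ, ¬(r = j₀ ∧ 0 = α j₀ - 1) := by
      intro r h
      omega
    rw [alt_mono hpos (hpos i) (hpos i') (hne i) (hne i')]
    exact canon_std hpos i i'
  · intro r c hc
    by_cases hsp : r = j₀ ∧ c + 1 = α j₀ - 1
    · obtain ⟨hb, h2⟩ := hsp
      subst hb
      -- now j₀ has been replaced by r everywhere
      have h3 : altEntry α σ i₀ r r (c+1) = Ssum α σ i₀ + 1 := by
        rw [h2]; exact alt_special hpos hσ
      have hcv : canonEntry α σ r c = Ssum α σ r + 2 := by rw [canonEntry_def]; omega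
      have h4 : altEntry α σ i₀ r r c = Ssum α σ r + 2 := by
        unfold altEntry phiFn; rw [hcv]; split_ifs <;> omega
      omega
    · by_cases hsp2 : r = j₀ ∧ c = α j₀ - 1
      · exfalso
        obtain ⟨hb, h2⟩ := hsp2
        subst hb
        omega
      · have hmono : altEntry α σ i₀ j₀ r (c+1) < altEntry α σ i₀ j₀ r c :=
          (alt_mono hpos hc (by omega : c < α r) hsp hsp2).mpr
            (by rw [canonEntry_def, canonEntry_def]; omega)
        omega
  · intro a b c hab hca hcb hlt
    by_cases hA : b = j₀ ∧ c + 1 = α j₀ - 1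
    · obtain ⟨hb, hc1⟩ := hA
      subst hb
      -- j₀ replaced by b
      have hbv : altEntry α σ i₀ b b (c+1) = Ssum α σ i₀ + 1 := by
        rw [hc1]; exact alt_special hpos hσ
      rw [hbv] at hlt ⊢
      have haj : a ≠ b := fun h => absurd hab (by rw [h]; exact lt_irrefl _)
      rcases lt_trichotomy (σ a) (σ i₀) with hz | hz | hz
      · exfalso
        have h1 := hcanon_lb a c hca
        have h2 := Smono α σ hz
        have h4 : altEntry α σ i₀ b a c = canonEntry α σ a c := by
          unfold altEntry phiFn
          split_ifs <;> omega
        omega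
      · have ha : a = i₀ := σ.injective hz
        subst ha
        refine ⟨by omega, ?_⟩
        have h1 := hcanon_lb a (c+1) (by omega)
        have h2 := Smono α σ hσ
        unfold altEntry phiFn
        split_ifs <;> omega
      · rcases lt_trichotomy (σ a) (σ b) with hz2 | hz2 | hz2
        · have hαa : α b ≤ α a := by
            by_contra hcon
            have haeq : α a = α b - 1 := by omega
            rcases lt_trichotomy a i₀ with hx | hx | hx
            · have := hcompat a i₀ hx hz
              omega
            · subst hx; omega
            · exact hC1 ⟨a, hx, hab, hz, hz2, haeq⟩
          refine ⟨by omega, ?_⟩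
          have h1 := hcanon_lb a (c+1) (by omega)
          have h2 : Ssum α σ i₀ ≤ Ssum α σ a := SmonoLe (le_of_lt hz)
          have h3 := Smono α σ hz2
          unfold altEntry phiFn
          split_ifs <;> omega
        · exact absurd (σ.injective hz2) haj
        · have hαa : α b ≤ α a := hcompat a b hab hz2
          refine ⟨by omega, ?_⟩
          have h1 := hcanon_lb a (c+1) (by omega)
          have h2 := Smono α σ hz2
          unfold altEntry phiFn
          split_ifs <;> omega
    · by_cases hB : a = j₀ ∧ c = α j₀ - 1
      · exfalso
        obtain ⟨ha, hc1⟩ := hB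
        subst ha
        -- j₀ replaced by a
        rcases lt_trichotomy (σ b) (σ a) with hz | hz | hz
        · have := hcompat a b hab hz
          omega
        · exact absurd (σ.injective hz) (fun h => absurd hab (by rw [h]; exact lt_irrefl _))
        · have hav : altEntry α σ i₀ a a c = Ssum α σ i₀ + 1 := by
            rw [hc1]; exact alt_special hpos hσ
          rw [hav] at hlt
          have h1 := hcanon_lb b (c+1) hcb
          have h2 := Smono α σ hz
          have h4 : altEntry α σ i₀ a b (c+1) = canonEntry α σ b (c+1) := by
            unfold altEntry phiFn
            split_ifs <;> omega
          omega
      · by_cases hCc : a = j₀ ∧ c + 1 = α j₀ - 1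
        · obtain ⟨ha, hc1⟩ := hCc
          subst ha
          -- j₀ replaced by a
          have hbj : b ≠ a := fun h => absurd hab (by rw [h]; exact lt_irrefl _)
          have hav : altEntry α σ i₀ a a (c+1) = Ssum α σ i₀ + 1 := by
            rw [hc1]; exact alt_special hpos hσ
          have hacv : altEntry α σ i₀ a a c = Ssum α σ a + 2 := by
            have hcv : canonEntry α σ a c = Ssum α σ a + 2 := by rw [canonEntry_def]; omega
            unfold altEntry phiFn; rw [hcv]; split_ifs <;> omega
          rw [hacv] at hlt
          rcases lt_trichotomy (σ b) (σ a) with hz | hz | hz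
          · have hble : α b ≤ α a := hcompat a b hab hz
            rcases lt_trichotomy (σ b) (σ i₀) with hz2 | hz2 | hz2
            · refine ⟨by omega, ?_⟩
              rw [hav]
              have h1 := hcanon_lb b (c+1) hcb
              have h2 := Smono α σ hz2
              have h4 : altEntry α σ i₀ a b (c+1) = canonEntry α σ b (c+1) := by
                unfold altEntry phiFn
                split_ifs <;> omega
              omega
            · exfalso
              have hb : b = i₀ := σ.injective hz2
              subst hb
              exact absurd (lt_trans hij hab) (lt_irrefl _)
            · exact absurd ⟨b, hab, hz2, hz, by omega⟩ hC2
          · exact absurd (σ.injective hz) hbj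
          · exfalso
            have h1 := hcanon_lb b (c+1) hcb
            have h2 := Smono α σ hz
            have h4 : altEntry α σ i₀ a b (c+1) = canonEntry α σ b (c+1) := by
              unfold altEntry phiFn
              split_ifs <;> omega
            omega
        · have h1 := (alt_mono (i₀ := i₀) hpos hcb hca hA hB).mp hlt
          obtain ⟨h2, h3⟩ := canon_triple hpos hcompat a b c hab hca hcb h1
          exact ⟨h2, (alt_mono (i₀ := i₀) hpos hcb h2 hA hCc).mpr h3⟩
end AltMain

section AltSource
variable {ℓ : ℕ} {α : Fin ℓ → ℕ} {σ : Equiv.Perm (Fin ℓ)} {i₀ j₀ : Fin ℓ}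

theorem alt_isSource (hpos : ∀ i, 0 < α i) (hcompat : Compatible α σ)
    (hij : i₀ < j₀) (hσ : σ i₀ < σ j₀) (hα2 : 2 ≤ α j₀) (hαle : α j₀ ≤ α i₀)
    (hC1 : ¬ ∃ k, i₀ < k ∧ k < j₀ ∧ σ i₀ < σ k ∧ σ k < σ j₀ ∧ α k = α j₀ - 1)
    (hC2 : ¬ ∃ k, j₀ < k ∧ σ i₀ < σ k ∧ σ k < σ j₀ ∧ α k = α j₀) :
    IsSourceTableau (∑ i, α i) α σ (altEntry α σ i₀ j₀) := by
  have hSPCT := alt_isSPCT hpos hcompat hij hσ hα2 hαle hC1 hC2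
  refine ⟨hSPCT, ?_⟩
  have hmm : Ssum α σ i₀ + 1 ≤ Ssum α σ j₀ := hmM hpos hσ
  intro d hd1 hdn hnd i c hc hval
  rcases Nat.eq_zero_or_pos c with rfl | hc1
  · exfalso
    apply hnd
    obtain ⟨r, c', hc', hval'⟩ := hSPCT.2.2.1 (d+1) (by omega) hdn
    exact ⟨i, 0, r, c', hc, hc', hval, hval', Nat.zero_le _⟩
  · by_cases hsp : i = j₀ ∧ c = α j₀ - 1
    · exfalso
      obtain ⟨hb, hc2⟩ := hsp
      subst hb
      -- j₀ replaced by i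
      have hdm : d = Ssum α σ i₀ + 1 := by rw [← hval, hc2]; exact alt_special hpos hσ
      apply hnd
      have hv2 : altEntry α σ i₀ i i₀ (α i₀ - 1) = Ssum α σ i₀ + 2 := by
        have hcv : canonEntry α σ i₀ (α i₀ - 1) = Ssum α σ i₀ + 1 := by
          rw [canonEntry_def]
          have := hpos i₀
          omega
        unfold altEntry phiFn
        rw [hcv]
        split_ifs <;> omega
      refine ⟨i, c, i₀, α i₀ - 1, hc, by have := hpos i₀; omega, hval, by rw [hv2]; omega, by omega⟩
    · have hstep : canonEntry α σ i (c-1) = canonEntry α σ i c + 1 := by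
        rw [canonEntry_def, canonEntry_def]
        omega
      have hvm1 : canonEntry α σ i c ≠ Ssum α σ i₀ := by
        intro h
        have heq : canonEntry α σ i (c-1) = canonEntry α σ i₀ (α i₀ - 1) := by
          rw [hstep, h, canonEntry_def]
          have := hpos i₀
          omega
        obtain ⟨h1, h2⟩ := canon_inj hpos (by omega) (by have := hpos i₀; omega) heq
        subst h1
        omega
      have hvM : canonEntry α σ i c ≠ Ssum α σ j₀ := by
        intro h
        have heq : canonEntry α σ i (c-1) = canonEntry α σ j₀ (α j₀ - 1) := by
          rw [hstep, h, canon_special hpos]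
        obtain ⟨h1, h2⟩ := canon_inj hpos (by omega) (by omega) heq
        subst h1
        omega
      have hvM1 : canonEntry α σ i c ≠ Ssum α σ j₀ + 1 := canon_ne_special hpos hc hsp
      refine ⟨c - 1, by omega, ?_⟩
      have hd : d = phiFn (Ssum α σ i₀ + 1) (Ssum α σ j₀) (canonEntry α σ i c) := by
        rw [← hval]; rfl
      have halt : altEntry α σ i₀ j₀ i (c-1)
          = phiFn (Ssum α σ i₀ + 1) (Ssum α σ j₀) (canonEntry α σ i c + 1) := by
        unfold altEntry
        rw [hstep]
      rw [halt, hd]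
      unfold phiFn
      split_ifs <;> omega

theorem alt_ne_canon (hpos : ∀ i, 0 < α i) (hσ : σ i₀ < σ j₀) (hα2 : 2 ≤ α j₀) :
    altEntry α σ i₀ j₀ j₀ (α j₀ - 1) ≠ canonEntry α σ j₀ (α j₀ - 1) := by
  rw [alt_special hpos hσ, canon_special hpos]
  have := hmM hpos hσ
  omega

end AltSource

/-- Any SPCT forces compatibility. -/
theorem spct_compatible {ℓ : ℕ} {n : ℕ} {α : Fin ℓ → ℕ} {σ : Equiv.Perm (Fin ℓ)}
    {τ : Fin ℓ → ℕ → ℕ} (hpos : ∀ i, 0 < α i) (hS : IsSPCT n α σ τ) : Compatible α σ := by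
  obtain ⟨hbd, hinj, hsurj, hstd, hrow, htri⟩ := hS
  intro i j hij hσ
  have key : ∀ y, y < α j → y < α i ∧ τ j y < τ i y := by
    intro y
    induction y with
    | zero => exact fun _ => ⟨hpos i, (hstd j i).mpr hσ⟩
    | succ y ih =>
      intro hy
      obtain ⟨h1, h2⟩ := ih (by omega)
      have hlt : τ j (y+1) < τ i y := by
        have hne : τ j (y+1) ≠ τ j y := by
          intro h
          have := hinj j (y+1) j y hy (by omega) h
          omega
        have := hrow j y hy
        omega
      exact htri i j y hij h1 hy hlt
  by_contra hcon
  have := (key (α i) (by omega)).1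
  omega

theorem source_eq_canon {ℓ : ℕ} {α : Fin ℓ → ℕ} {σ : Equiv.Perm (Fin ℓ)}
    (hpos : ∀ i, 0 < α i) (hsimple : SigmaSimple α σ) {τ : Fin ℓ → ℕ → ℕ}
    (hτ : IsSourceTableau (∑ i, α i) α σ τ) :
    ∀ i c, c < α i → τ i c = canonEntry α σ i c := by
  classical
  obtain ⟨⟨hbd, hinj, hsurj, hstd, hrow, htri⟩, hsrc⟩ := hτ
  -- strict decrease along rows
  have tstep : ∀ i c, c + 1 < α i → τ i (c+1) < τ i c := by
    intro i c hc
    have h1 := hrow i c hc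
    have h2 : τ i (c+1) ≠ τ i c := by
      intro h
      have := hinj i (c+1) i c hc (by omega) h
      omega
    omega
  have tmono : ∀ i x y, x ≤ y → y < α i → τ i y ≤ τ i x := by
    intro i x y hxy
    induction y with
    | zero => intro _; have : x = 0 := by omega
              rw [this]
    | succ y ih =>
      intro hy
      rcases Nat.lt_or_ge x (y+1) with h | h
      · have := ih (by omega) (by omega)
        have := tstep i y hy
        omega
      · have : x = y + 1 := by omega
        rw [this]
  -- the midrow-descent predicate
  have Pd_le : ∀ d : ℕ, (∃ i c i' c', c < α i ∧ c' < α i' ∧ τ i c = d ∧ τ i' c' = d + 1 ∧ 1 ≤ c ∧ c ≤ c')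
      → 1 ≤ d ∧ d ≤ ∑ i, α i := by
    rintro d ⟨i, c, i', c', hc, hc', hv, hv', h1, h2⟩
    have := hbd i c hc
    omega
  obtain ⟨D, hDmax, hD0⟩ : ∃ D, (∀ v, D < v →
      ¬ (∃ i c i' c', c < α i ∧ c' < α i' ∧ τ i c = v ∧ τ i' c' = v + 1 ∧ 1 ≤ c ∧ c ≤ c')) ∧
      ((∃ i c i' c', c < α i ∧ c' < α i' ∧ τ i c = D ∧ τ i' c' = D + 1 ∧ 1 ≤ c ∧ c ≤ c') ∨ D = 0) := by
    set Pd : ℕ → Prop := fun d =>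
      ∃ i c i' c', c < α i ∧ c' < α i' ∧ τ i c = d ∧ τ i' c' = d + 1 ∧ 1 ≤ c ∧ c ≤ c' with hPd
    by_cases hex : ∃ d, Pd d
    · obtain ⟨d0, hd0⟩ := hex
      refine ⟨Nat.findGreatest Pd (∑ i, α i), ?_, Or.inl ?_⟩
      · intro v hv hPv
        exact Nat.findGreatest_is_greatest hv (Pd_le v hPv).2 hPv
      · exact Nat.findGreatest_spec (Pd_le d0 hd0).2 hd0
    · push_neg at hex
      exact ⟨0, fun v _ => hex v, Or.inr rfl⟩
  -- the run-step property above level D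
  have hstep : ∀ i y, y < α i → D < τ i y → 1 ≤ y → τ i (y-1) = τ i y + 1 := by
    intro i y hy hDy hy1
    have hvn : τ i y < ∑ i, α i := by
      have h1 := hbd i (y-1) (by omega)
      have h2 := tstep i (y-1) (by omega : (y-1)+1 < α i)
      have h3 : (y-1)+1 = y := by omega
      rw [h3] at h2
      omega
    obtain ⟨i', c', hc', hv'⟩ := hsurj (τ i y + 1) (by omega) (by omega)
    have hcc : c' < y := by
      by_contra h
      push_neg at h
      exact hDmax (τ i y) hDy ⟨i, y, i', c', hy, hc', rfl, hv', hy1, h⟩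
    have hnd : ¬ IsDescent α τ (τ i y) := by
      rintro ⟨a, ca, a', ca', h1, h2, h3, h4, h5⟩
      obtain ⟨rfl, rfl⟩ := hinj a ca i y h1 hy h3
      obtain ⟨rfl, rfl⟩ := hinj a' ca' i' c' h2 hc' (by omega)
      omega
    obtain ⟨c'', hc''1, hc''2⟩ := hsrc (τ i y) (by have := hbd i y hy; omega) (by omega) hnd i y hy rfl
    have : c'' = y - 1 := by omega
    rw [← this]
    exact hc''2
  -- the run-length function
  set K : Fin ℓ → ℕ := fun i => sInf {x | x = α i ∨ (x < α i ∧ τ i x ≤ D)} with hK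
  have Kspec : ∀ i, K i = α i ∨ (K i < α i ∧ τ i (K i) ≤ D) := by
    intro i
    exact Nat.sInf_mem (⟨α i, Or.inl rfl⟩ : {x | x = α i ∨ (x < α i ∧ τ i x ≤ D)}.Nonempty)
  have Kle : ∀ i, K i ≤ α i := fun i => Nat.sInf_le (Or.inl rfl)
  have Klt : ∀ i x, x < K i → x < α i ∧ D < τ i x := by
    intro i x hx
    have hnot := Nat.notMem_of_lt_sInf hx
    simp only [Set.mem_setOf_eq, not_or, not_and, not_le, not_lt] at hnot
    have hxa : x < α i := by
      have := Kle i
      omega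
    exact ⟨hxa, hnot.2 hxa⟩
  have Kup : ∀ i x, x < α i → D < τ i x → x < K i := by
    intro i x hx hDx
    by_contra h
    push_neg at h
    rcases Kspec i with h1 | ⟨h1, h2⟩
    · omega
    · have := tmono i (K i) x h hx
      omega
  have Kpos : ∀ i, D < τ i 0 → 1 ≤ K i := fun i h => Kup i 0 (hpos i) h
  have run0 : ∀ i x, x < K i → τ i 0 = τ i x + x := by
    intro i x
    induction x with
    | zero => intro _; omega
    | succ x ih =>
      intro hx
      have h1 := ih (by omega)
      have h2 := hstep i (x+1) (Klt i (x+1) hx).1 (Klt i (x+1) hx).2 (by omega)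
      have h3 : (x+1) - 1 = x := by omega
      rw [h3] at h2
      omega
  have iord : ∀ i i', D < τ i 0 → D < τ i' 0 → σ i < σ i' → τ i 0 + K i' ≤ τ i' 0 := by
    intro i i' hi hi' hσ
    by_contra h
    push_neg at h
    have hlt : τ i 0 < τ i' 0 := (hstd i i').mpr hσ
    set x := τ i' 0 - τ i 0 with hx
    have hx1 : 1 ≤ x := by omega
    have hx2 : x < K i' := by omega
    have h1 := run0 i' x hx2
    have h2 : τ i' x = τ i 0 := by omega
    obtain ⟨h3, h4⟩ := hinj i' x i 0 (Klt i' x hx2).1 (hpos i) h2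
    omega
  -- the two key triple-condition lemmas
  have gen : ∀ p r, D < τ p 0 → K p < α p → D < τ r 0 → p < r → σ r < σ p → K r ≤ K p := by
    intro p r hp hpb hr hpr hσ
    by_contra h
    push_neg at h
    have hKp1 : 1 ≤ K p := Kpos p hp
    have hio := iord r p hr hp hσ
    have h1 : τ r (K p) + K p = τ r 0 := by
      have := run0 r (K p) (by omega)
      omega
    have h2 : τ p (K p - 1) + (K p - 1) = τ p 0 := by
      have := run0 p (K p - 1) (by omega)
      omega
    have hprem : τ r ((K p - 1) + 1) < τ p (K p - 1) := by
      have hkk : (K p - 1) + 1 = K p := by omega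
      rw [hkk]
      omega
    have hcol1 : (K p - 1) < α p := by omega
    have hcol2 : (K p - 1) + 1 < α r := by
      have := Kle r
      omega
    obtain ⟨hc1, hc2⟩ := htri p r (K p - 1) hpr hcol1 hcol2 hprem
    have hkk : (K p - 1) + 1 = K p := by omega
    rw [hkk] at hc2
    have h5 : τ p (K p) ≤ D := by
      rcases Kspec p with h6 | ⟨h6, h7⟩
      · omega
      · exact h7
    have h6 := (Klt r (K p) (by omega)).2
    omega
  have gen' : ∀ p r, D < τ p 0 → K p < α p → D < τ r 0 → r < p → σ r < σ p → K p ≤ K r → α p ≤ α r := by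
    intro p r hp hpb hr hrp hσ hKK
    have hKp1 : 1 ≤ K p := Kpos p hp
    have hpd : τ p (K p) ≤ D := by
      rcases Kspec p with h6 | ⟨h6, h7⟩
      · omega
      · exact h7
    have Q : ∀ y, K p ≤ y → y < α p → y < α r ∧ τ p y < τ r y := by
      intro y
      induction y with
      | zero => intro h0; omega
      | succ y ih =>
        intro hy hy1
        rcases Nat.lt_or_ge y (K p) with hlt | hge
        · -- y + 1 = K p : base case
          have hKpy : K p = y + 1 := by omega
          have hpd' : τ p (y+1) ≤ D := by rw [← hKpy]; exact hpd
          have hprem : τ p (y+1) < τ r y := by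
            have h1 := (Klt r y (by omega)).2
            omega
          have hcol1 : y < α r := (Klt r y (by omega)).1
          obtain ⟨h1, h2⟩ := htri r p y hrp hcol1 hy1 hprem
          exact ⟨h1, h2⟩
        · obtain ⟨h1, h2⟩ := ih hge (by omega)
          have hprem : τ p (y+1) < τ r y := by
            have := tstep p y hy1
            omega
          exact htri r p y hrp h1 hy1 hprem
    obtain ⟨h1, _⟩ := Q (α p - 1) (by omega) (by omega)
    omega
  rcases hD0 with hPD | rfl
  · -- Case M : a largest midrow descent exists — contradiction with σ-simplicity
    exfalso
    obtain ⟨j, c, b, e, hcj, heb, hjc, hbe, hc1, hce⟩ := hPD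
    have hjb : j ≠ b := by
      intro h
      subst h
      have := tmono j c e hce heb
      omega
    have hRj : D < τ j 0 := by
      have h1 := tmono j 0 c (by omega) hcj
      have h2 : τ j c < τ j 0 := by
        rcases Nat.eq_zero_or_pos c with h | h
        · omega
        · have h3 := tmono j 1 c h hcj
          have h4 : τ j 1 < τ j 0 := tstep j 0 (by omega)
          omega
      omega
    have hRb : D < τ b 0 := by
      have := tmono b 0 e (by omega) heb
      omega
    have hKj : K j = c := by
      have h1 : c - 1 < K j := by
        apply Kup j (c-1) (by omega)
        have h2 := tstep j (c-1) (by omega)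
        have h3 : (c-1)+1 = c := by omega
        rw [h3] at h2
        omega
      have h2 : ¬ (c < K j) := by
        intro h
        have := (Klt j c h).2
        omega
      omega
    have hKb : K b = e + 1 := by
      have h1 : e < K b := Kup b e heb (by omega)
      have h2 : ¬ (e + 1 < K b) := by
        intro h
        have h3 := run0 b (e+1) h
        have h4 := run0 b e (by omega)
        have := (Klt b (e+1) h).2
        omega
      omega
    have htb0 : τ b 0 = D + 1 + e := by
      have := run0 b e (by omega)
      omega
    have bmin : ∀ r, D < τ r 0 → r ≠ b → σ b < σ r := by
      intro r hr hrb
      rcases lt_trichotomy (σ b) (σ r) with h | h | h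
      · exact h
      · exact absurd (σ.injective h) (Ne.symm hrb)
      · have := iord r b hr hRb h
        rw [htb0, hKb] at this
        omega
    -- the set of broken rows
    have hBj : D < τ j 0 ∧ K j < α j ∧ j ≠ b := ⟨hRj, by omega, hjb⟩
    obtain ⟨js, hjsmem, hjsmin⟩ := Finset.exists_min_image
      (Finset.univ.filter (fun r => D < τ r 0 ∧ K r < α r ∧ r ≠ b)) (fun r => σ r)
      ⟨j, by simp only [Finset.mem_filter, Finset.mem_univ, true_and]; exact hBj⟩
    simp only [Finset.mem_filter, Finset.mem_univ, true_and] at hjsmem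
    obtain ⟨hjs1, hjs2, hjs3⟩ := hjsmem
    have hjsmin' : ∀ r, D < τ r 0 → K r < α r → r ≠ b → σ js ≤ σ r := by
      intro r h1 h2 h3
      exact hjsmin r (by simp only [Finset.mem_filter, Finset.mem_univ, true_and]; exact ⟨h1, h2, h3⟩)
    have hσbjs : σ b < σ js := bmin js hjs1 hjs3
    have runk : ∀ k, σ b < σ k → D < τ k 0 := by
      intro k h
      have := (hstd b k).mpr h
      omega
    have full : ∀ k, σ b < σ k → σ k < σ js → K k = α k := by
      intro k h1 h2
      by_contra h
      have h3 : K k < α k := by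
        have := Kle k
        omega
      have h4 : k ≠ b := by
        intro h5
        subst h5
        exact absurd h1 (lt_irrefl _)
      have := hjsmin' k (runk k h1) h3 h4
      exact absurd h2 (by exact not_lt.mpr this)
    have hKjs1 : 1 ≤ K js := Kpos js hjs1
    by_cases htar : ∃ i, D < τ i 0 ∧ i < js ∧ σ i < σ js ∧ α js ≤ α i
    · -- TARGET case
      obtain ⟨i, hri, hijs, hσijs, hαijs⟩ := htar
      have hPACD : PACD α σ i js := ⟨hijs, hσijs, by omega, hαijs⟩
      have hσbi : σ b ≤ σ i := by
        rcases eq_or_ne i b with h | h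
        · rw [h]
        · exact le_of_lt (bmin i hri h)
      rcases hsimple.2 i js hPACD with ⟨k, hik, hkjs, hσik, hσkjs, hαk⟩ | ⟨k, hjsk, hσik, hσkjs, hαk⟩
      · -- C1 witness killed
        have hσbk : σ b < σ k := lt_of_le_of_lt hσbi hσik
        have hfull : K k = α k := full k hσbk hσkjs
        have := gen' js k hjs1 hjs2 (runk k hσbk) hkjs hσkjs (by omega)
        omega
      · -- C2 witness killed
        have hσbk : σ b < σ k := lt_of_le_of_lt hσbi hσik
        have hfull : K k = α k := full k hσbk hσkjs
        have := gen js k hjs1 hjs2 (runk k hσbk) hjsk hσkjs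
        omega
    · push_neg at htar
      -- no TARGET row: derive the decreasing chain contradiction
      have hKse : e + 1 ≤ K js := by
        rcases lt_trichotomy b js with h | h | h
        · by_contra hcon
          push_neg at hcon
          have := gen' js b hjs1 hjs2 hRb h hσbjs (by omega)
          have := htar b hRb h hσbjs
          omega
        · exact absurd h hjs3.symm
        · have := gen js b hjs1 hjs2 hRb h hσbjs
          omega
    -- js ≠ j and σ js < σ j
      have hjsj : js ≠ j := by
        intro h
        rw [h] at hKse
        omega
      have hσjsj : σ js < σ j := by
        have h1 := hjsmin' j hRj (by omega) hjb
        rcases lt_or_eq_of_le h1 with h | h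
        · exact h
        · exact absurd (σ.injective h) hjsj
      have hjsltj : js < j := by
        rcases lt_trichotomy js j with h | h | h
        · exact h
        · exact absurd h hjsj
        · exfalso
          have := gen j js hRj (by omega) hjs1 h hσjsj
          omega
      have hαjjs : α j ≤ α js := by
        apply gen' j js hRj (by omega) hjs1 hjsltj hσjsj
        omega
      -- the recursion
      have hrec : ∀ s : ℕ, ∀ KK : Fin ℓ, (σ KK : ℕ) = s →
          D < τ KK 0 → K KK < α KK → js < KK → σ js < σ KK → 2 ≤ α KK → α KK ≤ α js →
          K KK ≤ c → False := by
        intro s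
        induction s using Nat.strong_induction_on with
        | _ s IH =>
          intro KK hs hK1 hK2 hK3 hK4 hK5 hK6 hK7
          have hPACD : PACD α σ js KK := ⟨hK3, hK4, hK5, hK6⟩
          rcases hsimple.2 js KK hPACD with ⟨k, hik, hkK, hσik, hσkK, hαk⟩ | ⟨k, hKk, hσik, hσkK, hαk⟩
          · -- C1 witness
            have hσbk : σ b < σ k := lt_trans hσbjs hσik
            have hRk : D < τ k 0 := runk k hσbk
            rcases Nat.lt_or_ge (K k) (K KK) with hκ | hκ
            · -- broken witness : recurse
              have hKk1 : 1 ≤ K k := Kpos k hRk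
              apply IH (σ k : ℕ) (by rw [← hs]; exact hσkK) k rfl hRk (by omega) hik hσik
                (by omega) (by omega) (by omega)
            · -- bootstrap kill
              have := gen' KK k hK1 hK2 hRk hkK hσkK hκ
              omega
          · -- C2 witness
            have hσbk : σ b < σ k := lt_trans hσbjs hσik
            have hRk : D < τ k 0 := runk k hσbk
            have hκ := gen KK k hK1 hK2 hRk hKk hσkK
            apply IH (σ k : ℕ) (by rw [← hs]; exact hσkK) k rfl hRk (by omega)
              (lt_trans hK3 hKk) hσik (by omega) (by omega) (by omega)
      exact hrec (σ j : ℕ) j rfl hRj (by omega) hjsltj hσjsj (by omega) hαjjs (by omega)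
  · -- Case N : no midrow descent — the tableau is canonical
    have fullall : ∀ i, K i = α i := by
      intro i
      rcases Kspec i with h | ⟨h1, h2⟩
      · exact h
      · exfalso
        have := hbd i (K i) h1
        omega
    have key : ∀ s : ℕ, ∀ i : Fin ℓ, (σ i : ℕ) = s → τ i 0 = Ssum α σ i + α i := by
      intro s
      induction s using Nat.strong_induction_on with
      | _ s IH =>
        intro i hs
        have hrun : τ i (α i - 1) + (α i - 1) = τ i 0 := by
          have := run0 i (α i - 1) (by rw [fullall]; have := hpos i; omega)
          omega
        by_cases hex : ∃ k, σ k < σ i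
        · obtain ⟨k0, hk0⟩ := hex
          obtain ⟨k, hkmem, hkmax⟩ := Finset.exists_max_image
            (Finset.univ.filter (fun k => σ k < σ i)) (fun k => σ k)
            ⟨k0, by simp only [Finset.mem_filter, Finset.mem_univ, true_and]; exact hk0⟩
          simp only [Finset.mem_filter, Finset.mem_univ, true_and] at hkmem
          have hkmax' : ∀ x, σ x < σ i → σ x ≤ σ k := by
            intro x hx
            exact hkmax x (by simp only [Finset.mem_filter, Finset.mem_univ, true_and]; exact hx)
          have hio : τ k 0 + α i ≤ τ i 0 := by
            have := iord k i (by have := hbd k 0 (hpos k); omega)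
              (by have := hbd i 0 (hpos i); omega) hkmem
            rw [fullall] at this
            exact this
          have hbk := hbd k 0 (hpos k)
          have hposi := hpos i
          -- v := τ i (α i - 1) - 1 = value just below the bottom of row i
          have hv2 : 2 ≤ τ i (α i - 1) := by omega
          obtain ⟨k', y, hyk', hvk'⟩ := hsurj (τ i (α i - 1) - 1) (by omega)
            (by have := hbd i (α i -1) (by have := hpos i; omega); omega)
          have hy0 : y = 0 := by
            by_contra hy
            have h1 := hstep k' y hyk' (by have := hbd k' y hyk'; omega) (by omega)
            rw [hvk'] at h1
            have h2 : τ k' (y-1) = τ i (α i - 1) := by omega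
            obtain ⟨h3, h4⟩ := hinj k' (y-1) i (α i - 1) (by omega) (by have := hpos i; omega) h2
            subst h3
            omega
          subst hy0
          have hσk'i : σ k' < σ i := by
            rw [← hstd]
            omega
          have hkk' : k' = k := by
            rcases lt_or_eq_of_le (hkmax' k' hσk'i) with h | h
            · exfalso
              have := (hstd k' k).mpr h
              omega
            · exact σ.injective h
          rw [hkk'] at hvk'
          have hIH : τ k 0 = Ssum α σ k + α k := by
            apply IH (σ k : ℕ) (by rw [← hs]; exact hkmem) k rfl
          have hSsum : Ssum α σ i = Ssum α σ k + α k := by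
            have hset : Finset.univ.filter (fun x => σ x < σ i)
                = insert k (Finset.univ.filter (fun x => σ x < σ k)) := by
              ext x
              simp only [Finset.mem_filter, Finset.mem_univ, true_and, Finset.mem_insert]
              constructor
              · intro hx
                rcases lt_or_eq_of_le (hkmax' x hx) with h | h
                · exact Or.inr h
                · exact Or.inl (σ.injective h)
              · rintro (rfl | hx)
                · exact hkmem
                · exact lt_trans hx hkmem
            unfold Ssum
            rw [hset, Finset.sum_insert (by simp)]
            omega
          omega
        · push_neg at hex
          have hS0 : Ssum α σ i = 0 := by
            unfold Ssum
            apply Finset.sum_eq_zero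
            intro x hx
            simp only [Finset.mem_filter, Finset.mem_univ, true_and] at hx
            exact absurd hx (not_lt.mpr (hex x))
          have hposi := hpos i
          have hbot : τ i (α i - 1) = 1 := by
            by_contra hcon
            have h2 : 2 ≤ τ i (α i - 1) := by
              have := hbd i (α i - 1) (by have := hpos i; omega)
              omega
            obtain ⟨k', y, hyk', hvk'⟩ := hsurj (τ i (α i - 1) - 1) (by omega)
              (by have := hbd i (α i -1) (by have := hpos i; omega); omega)
            have hy0 : y = 0 := by
              by_contra hy
              have h1 := hstep k' y hyk' (by have := hbd k' y hyk'; omega) (by omega)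
              rw [hvk'] at h1
              have h3 : τ k' (y-1) = τ i (α i - 1) := by omega
              obtain ⟨h4, h5⟩ := hinj k' (y-1) i (α i - 1) (by omega) (by have := hpos i; omega) h3
              subst h4
              omega
            subst hy0
            have : σ k' < σ i := by
              rw [← hstd]
              omega
            exact absurd this (not_lt.mpr (hex k'))
          omega
    intro i cc hcc
    have h1 := run0 i cc (by rw [fullall]; exact hcc)
    have h2 := key (σ i : ℕ) i rfl
    rw [canonEntry_def]
    omega


/-- The set of SPCTs of shape `α` and type `σ` contains a unique source tableau
(uniqueness meaning any two source tableaux agree on all boxes) if and only if `α` is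
`σ`-simple. -/
theorem unique_source_iff_sigmaSimple {ℓ : ℕ} (α : Fin ℓ → ℕ) (σ : Equiv.Perm (Fin ℓ))
    (hpos : ∀ i, 0 < α i) :
    ((∃ τ : Fin ℓ → ℕ → ℕ, IsSourceTableau (∑ i, α i) α σ τ) ∧
      ∀ τ τ' : Fin ℓ → ℕ → ℕ, IsSourceTableau (∑ i, α i) α σ τ →
        IsSourceTableau (∑ i, α i) α σ τ' →
        ∀ (i : Fin ℓ) (c : ℕ), c < α i → τ i c = τ' i c) ↔
    SigmaSimple α σ := by
  constructor
  · rintro ⟨⟨τ₀, hτ₀⟩, huniq⟩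
    have hcompat : Compatible α σ := spct_compatible hpos hτ₀.1
    refine ⟨hcompat, ?_⟩
    intro i j hPACD
    by_contra hno
    rw [not_or] at hno
    obtain ⟨hno1, hno2⟩ := hno
    obtain ⟨hij, hσ, hα2, hαle⟩ := hPACD
    have h1 := canon_isSource (σ := σ) hpos hcompat
    have h2 := alt_isSource hpos hcompat hij hσ hα2 hαle hno1 hno2
    have h3 := huniq _ _ h1 h2 j (α j - 1) (by omega)
    exact alt_ne_canon hpos hσ hα2 h3.symm
  · intro hsimple
    refine ⟨⟨canonEntry α σ, canon_isSource hpos hsimple.1⟩, ?_⟩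
    intro τ τ' h1 h2 i c hc
    rw [source_eq_canon hpos hsimple h1 i c hc, source_eq_canon hpos hsimple h2 i c hc]
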